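/- arXiv:2012.06713 — 3 statements merged into one kernel-verified Lean document; each statement's English description precedes it below -/
import Mathlib

section
/- Let U and V be strings over an arbitrary alphabet and let b ≥ 1 be an integer. For every partition of V into b contiguous, possibly empty substrings V = V_1 V_2 ⋯ V_b, there exists a partition of U into b contiguous, possibly empty substrings U = U_1 U_2 ⋯ U_b such that d_E(U, V) ≥ Σ_{i=1}^b 1[U_i ≠ V_i], where 1[U_i ≠ V_i] equals 1 if U_i and V_i are unequal as strings and 0 otherwise. -/
noncomputable section

/-- Costs for the Levenshtein distance (formerly in Mathlib, `Mathlib/Data/List/EditDistance/Defs.lean`). -/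
structure Levenshtein.Cost (α β δ : Type*) where
  delete : α → δ
  insert : β → δ
  substitute : α → β → δ

/-- The default unit costs (formerly in Mathlib). -/
def Levenshtein.defaultCost {α : Type*} [DecidableEq α] : Levenshtein.Cost α α ℕ where
  delete _ := 1
  insert _ := 1
  substitute a b := if a = b then 0 else 1

/-- Levenshtein distance, by the recursion that characterized the former Mathlib definition. -/
def levenshtein {α β δ : Type*} [AddZeroClass δ] [Min δ] (C : Levenshtein.Cost α β δ) :
    List α → List β → δ
  | [], [] => 0
  | [], y :: ys => C.insert y + levenshtein C [] ys
  | x :: xs, [] => C.delete x + levenshtein C xs []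
  | x :: xs, y :: ys => min (C.delete x + levenshtein C xs (y :: ys))
      (min (C.insert y + levenshtein C (x :: xs) ys) (C.substitute x y + levenshtein C xs ys))

/-- Levenshtein edit distance with unit costs. -/
def editDist {α : Type*} [DecidableEq α] (x y : List α) : ℕ :=
  levenshtein Levenshtein.defaultCost x y

section LevAux
variable {α β δ : Type*} [AddZeroClass δ] [Min δ] (C : Levenshtein.Cost α β δ)

theorem levenshtein_nil_nil : levenshtein C [] [] = 0 := by rw [levenshtein]

theorem levenshtein_nil_cons (y : β) (ys : List β) :
    levenshtein C [] (y :: ys) = C.insert y + levenshtein C [] ys := by rw [levenshtein]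

theorem levenshtein_cons_nil (x : α) (xs : List α) :
    levenshtein C (x :: xs) [] = C.delete x + levenshtein C xs [] := by rw [levenshtein]

theorem levenshtein_cons_cons (x : α) (xs : List α) (y : β) (ys : List β) :
    levenshtein C (x :: xs) (y :: ys) = min (C.delete x + levenshtein C xs (y :: ys))
      (min (C.insert y + levenshtein C (x :: xs) ys) (C.substitute x y + levenshtein C xs ys)) := by
  rw [levenshtein]

end LevAux

namespace EditDistAux

variable {α : Type*} [DecidableEq α]

lemma editDist_del_le (x : α) (a b : List α) : editDist (x :: a) b ≤ 1 + editDist a b := by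
  cases b with
  | nil => simp [editDist, levenshtein_cons_nil, Levenshtein.defaultCost]
  | cons y b =>
    simp only [editDist, levenshtein_cons_cons]
    exact le_trans (min_le_left _ _) (by simp [Levenshtein.defaultCost])

lemma editDist_ins_le (y : α) (a b : List α) : editDist a (y :: b) ≤ 1 + editDist a b := by
  cases a with
  | nil => simp [editDist, levenshtein_nil_cons, Levenshtein.defaultCost]
  | cons x a =>
    simp only [editDist, levenshtein_cons_cons]
    exact le_trans (le_trans (min_le_right _ _) (min_le_left _ _))
      (by simp [Levenshtein.defaultCost])

lemma editDist_sub_le (x y : α) (a b : List α) :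
    editDist (x :: a) (y :: b) ≤ (if x = y then 0 else 1) + editDist a b := by
  simp only [editDist, levenshtein_cons_cons]
  exact le_trans (le_trans (min_le_right _ _) (min_le_right _ _))
    (by simp [Levenshtein.defaultCost])

lemma eq_of_editDist_eq_zero : ∀ {a b : List α}, editDist a b = 0 → a = b := by
  intro a
  induction a with
  | nil => intro b h; cases b with
    | nil => rfl
    | cons y b => simp [editDist, levenshtein_nil_cons, Levenshtein.defaultCost] at h
  | cons x a ih =>
    intro b h
    cases b with
    | nil => simp [editDist, levenshtein_cons_nil, Levenshtein.defaultCost] at h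
    | cons y b =>
      simp only [editDist, levenshtein_cons_cons, Levenshtein.defaultCost] at h
      by_cases hxy : x = y
      · simp only [hxy, if_pos rfl] at h
        have : editDist a b = 0 := by
          change min _ (min _ (0 + levenshtein Levenshtein.defaultCost a b)) = 0 at h
          unfold editDist
          omega
        simp [hxy, ih this]
      · simp only [if_neg hxy] at h
        omega

lemma one_le_editDist_of_ne {a b : List α} (h : a ≠ b) : 1 ≤ editDist a b :=
  Nat.one_le_iff_ne_zero.mpr (fun h0 => h (eq_of_editDist_eq_zero h0))

/-- Splitting lemma: the edit distance to a concatenation splits. -/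
lemma editDist_split (ys₁ : List α) : ∀ (xs ys₂ : List α),
    ∃ xs₁ xs₂, xs = xs₁ ++ xs₂ ∧
      editDist xs₁ ys₁ + editDist xs₂ ys₂ ≤ editDist xs (ys₁ ++ ys₂) := by
  induction ys₁ with
  | nil =>
    intro xs ys₂
    exact ⟨[], xs, rfl, by simp [editDist, levenshtein_nil_nil]⟩
  | cons y ys₁ ih =>
    intro xs
    induction xs with
    | nil =>
      intro ys₂
      refine ⟨[], [], rfl, ?_⟩
      obtain ⟨xs₁, xs₂, hx, hle⟩ := ih [] ys₂
      obtain ⟨h1, h2⟩ := List.append_eq_nil_iff.mp hx.symm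
      subst h1; subst h2
      have e1 : editDist ([] : List α) (y :: ys₁) = 1 + editDist ([] : List α) ys₁ := by
        simp [editDist, levenshtein_nil_cons, Levenshtein.defaultCost]
      have e2 : editDist ([] : List α) (y :: (ys₁ ++ ys₂)) =
          1 + editDist ([] : List α) (ys₁ ++ ys₂) := by
        simp [editDist, levenshtein_nil_cons, Levenshtein.defaultCost]
      simp only [List.cons_append, e1, e2]
      omega
    | cons x xs ihx =>
      intro ys₂
      have key : editDist (x :: xs) (y :: (ys₁ ++ ys₂)) =
          min (1 + editDist xs (y :: (ys₁ ++ ys₂)))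
            (min (1 + editDist (x :: xs) (ys₁ ++ ys₂))
              ((if x = y then 0 else 1) + editDist xs (ys₁ ++ ys₂))) := by
        simp [editDist, levenshtein_cons_cons, Levenshtein.defaultCost]
      rcases min_cases (1 + editDist xs (y :: (ys₁ ++ ys₂)))
          (min (1 + editDist (x :: xs) (ys₁ ++ ys₂))
            ((if x = y then 0 else 1) + editDist xs (ys₁ ++ ys₂))) with ⟨hmin, _⟩ | ⟨hmin, _⟩
      · -- delete branch
        obtain ⟨xs₁, xs₂, hx, hle⟩ := ihx ys₂
        simp only [List.cons_append] at hle
        refine ⟨x :: xs₁, xs₂, by simp [hx], ?_⟩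
        have hd := editDist_del_le x xs₁ (y :: ys₁)
        rw [List.cons_append, key, hmin]
        omega
      · rcases min_cases (1 + editDist (x :: xs) (ys₁ ++ ys₂))
            ((if x = y then 0 else 1) + editDist xs (ys₁ ++ ys₂)) with ⟨hmin2, _⟩ | ⟨hmin2, _⟩
        · -- insert branch
          obtain ⟨xs₁, xs₂, hx, hle⟩ := ih (x :: xs) ys₂
          refine ⟨xs₁, xs₂, hx, ?_⟩
          have hi := editDist_ins_le y xs₁ ys₁
          rw [List.cons_append, key, hmin, hmin2]
          omega
        · -- substitute branch
          obtain ⟨xs₁, xs₂, hx, hle⟩ := ih xs ys₂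
          refine ⟨x :: xs₁, xs₂, by simp [hx], ?_⟩
          have hs := editDist_sub_le x y xs₁ ys₁
          rw [List.cons_append, key, hmin, hmin2]
          omega

lemma main_aux : ∀ (Vs : List (List α)), Vs ≠ [] → ∀ (U : List α),
    ∃ Us : List (List α), Us.length = Vs.length ∧ U = Us.flatten ∧
      (Us.zip Vs).countP (fun p => decide (p.1 ≠ p.2)) ≤ editDist U Vs.flatten := by
  intro Vs
  induction Vs with
  | nil => intro h; exact absurd rfl h
  | cons V₁ Vs ih =>
    intro _ U
    cases Vs with
    | nil =>
      refine ⟨[U], rfl, by simp, ?_⟩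
      simp only [List.zip_cons_cons, List.zip_nil_right, List.countP_cons, List.countP_nil,
        List.flatten_cons, List.flatten_nil, List.append_nil]
      by_cases h : U = V₁
      · simp [h]
      · have := one_le_editDist_of_ne h
        rw [if_pos (by simp [h])]
        omega
    | cons V₂ Vs' =>
      obtain ⟨U₁, U₂, hU, hle⟩ := editDist_split V₁ U (V₂ :: Vs').flatten
      obtain ⟨Us, hlen, hU2, hcount⟩ := ih (by simp) U₂
      refine ⟨U₁ :: Us, by simp [hlen], by simp [hU, hU2], ?_⟩
      have hflat : editDist U ((V₁ :: V₂ :: Vs').flatten) =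
          editDist U (V₁ ++ (V₂ :: Vs').flatten) := by rw [List.flatten_cons]
      rw [hflat, List.zip_cons_cons, List.countP_cons]
      by_cases h : U₁ = V₁
      · rw [if_neg (by simp [h])]
        omega
      · have h1 := one_le_editDist_of_ne h
        rw [if_pos (by simp [h])]
        omega

end EditDistAux

/-- For every partition of `V` into `b` contiguous (possibly empty) substrings, there is a
partition of `U` into `b` contiguous (possibly empty) substrings such that the edit distance
`d_E(U,V)` is at least the number of indices at which the two partitions disagree. -/
theorem editDist_ge_count_ne_blocks {α : Type*} [DecidableEq α]
    (U V : List α) (b : ℕ) (hb : 1 ≤ b)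
    (Vs : List (List α)) (hVb : Vs.length = b) (hV : V = Vs.flatten) :
    ∃ Us : List (List α), Us.length = b ∧ U = Us.flatten ∧
      (Us.zip Vs).countP (fun p => decide (p.1 ≠ p.2)) ≤ editDist U V := by
  subst hV
  have hne : Vs ≠ [] := by
    intro h; rw [h] at hVb; simp at hVb; omega
  obtain ⟨Us, h1, h2, h3⟩ := EditDistAux.main_aux Vs hne U
  exact ⟨Us, by rw [h1, hVb], h2, h3⟩
end
end

section
/- Let r be a 0-run of Y that has a 1-run of Y immediately adjacent on each side, and let r_X^0 denote the number of positions of r at which X equals 0. Let Z be the number of kept positions of r at which X equals 0 and let W be the number of kept positions of the two 1-runs of Y adjacent to r at which X equals 0. Then: (i) deterministically, whenever ℓ is an index of X̃ with X̃[ℓ] = 0 originating in r such that i_ℓ and j_ℓ exist and originate in the two 1-runs of Y adjacent to r, one has S(X̃, ℓ) ≤ Z + W; and (ii) Z has the Binomial(r_X^0, p) distribution and for every t, P(Z + W ≥ t) ≤ P(B_1 + B_2 ≥ t), where B_1 ~ Binomial(r_X^0, p) and B_2 ~ Binomial(2m, p) are independent. -/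
open scoped ENNReal

noncomputable section

/-- Bernoulli distribution with real parameter (clamped to `[0,1]`). -/
def bern (p : ℝ) : PMF Bool :=
  PMF.bernoulli (min (Real.toNNReal p) 1) (min_le_right _ _)

/-- The distribution of a keep-mask of length `n`: i.i.d. Bernoulli(`p`) entries. -/
def maskPMF (p : ℝ) : ℕ → PMF (List Bool)
  | 0 => PMF.pure []
  | n + 1 => (bern p).bind fun b => (maskPMF p n).map fun M => b :: M

/-- Logarithm to base `1/q`. -/
def logq (q x : ℝ) : ℝ := Real.log x / Real.log (1 / q)

/-- `IsRun X a b v` : positions `a, …, b-1` of `X` form a maximal block (a run)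
of bits equal to `v`. -/
def IsRun (X : List Bool) (a b : ℕ) (v : Bool) : Prop :=
  a < b ∧ b ≤ X.length ∧ (∀ i, a ≤ i → i < b → X.getD i false = v) ∧
    (a = 0 ∨ X.getD (a - 1) false ≠ v) ∧ (b = X.length ∨ X.getD b false ≠ v)

/-- The positions kept by a mask `M`, in increasing order. -/
def keptIdx (M : List Bool) : List ℕ :=
  (List.range M.length).filter fun i => M.getD i false

/-- The trace of `X` determined by the keep-mask `M`: the subsequence of `X`
at the kept positions. -/
def maskTrace (X M : List Bool) : List Bool :=
  (keptIdx M).map fun i => X.getD i false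

/-- The originating position (in the source string) of index `ℓ` of the trace
determined by mask `M`. -/
def originPos (M : List Bool) (ℓ : ℕ) : ℕ := (keptIdx M).getD ℓ M.length

/-- Indices (in increasing order) of the `1`s of `t` strictly to the left of `ℓ`. -/
def onesLeft (t : List Bool) (ℓ : ℕ) : List ℕ :=
  (List.range ℓ).filter fun k => t.getD k false

/-- Indices (in increasing order) of the `1`s of `t` strictly to the right of `ℓ`. -/
def onesRight (t : List Bool) (ℓ : ℕ) : List ℕ :=
  (List.range t.length).filter fun k => decide (ℓ < k) && t.getD k false

/-- `i_ℓ` exists: there are at least `m+1` ones strictly to the left of `ℓ` in `t`. -/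
def iExists (t : List Bool) (ℓ m : ℕ) : Prop := m + 1 ≤ (onesLeft t ℓ).length

/-- `j_ℓ` exists: there are at least `m+1` ones strictly to the right of `ℓ` in `t`. -/
def jExists (t : List Bool) (ℓ m : ℕ) : Prop := m + 1 ≤ (onesRight t ℓ).length

/-- `i_ℓ`: the index of `t` carrying the `(m+1)`-st one strictly to the left of `ℓ`. -/
def iIdx (t : List Bool) (ℓ m : ℕ) : ℕ :=
  (onesLeft t ℓ).getD ((onesLeft t ℓ).length - (m + 1)) 0

/-- `j_ℓ`: the index of `t` carrying the `(m+1)`-st one strictly to the right of `ℓ`. -/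
def jIdx (t : List Bool) (ℓ m : ℕ) : ℕ := (onesRight t ℓ).getD m 0

/-- `S(t, ℓ)`: the number of indices `k` with `i_ℓ ≤ k ≤ j_ℓ` and `t[k] = 0`. -/
def Sval (t : List Bool) (ℓ m : ℕ) : ℕ :=
  ((List.range t.length).filter fun k =>
    decide (iIdx t ℓ m ≤ k) && decide (k ≤ jIdx t ℓ m) && !(t.getD k true)).length

/-- `X` is obtained from `Y` (of the same length) by modifying at most `m` bits
within each run of `Y`. -/
def ModifiedRuns (Y X : List Bool) (m : ℕ) : Prop :=
  X.length = Y.length ∧ ∀ a b v, IsRun Y a b v →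
    ((Finset.Ico a b).filter fun i => X.getD i false ≠ Y.getD i false).card ≤ m

/-- The binomial distribution `Bin(k, p)`, as the number of successes among `k`
independent Bernoulli(`p`) trials. -/
def binPMF (p : ℝ) (k : ℕ) : PMF ℕ := (maskPMF p k).map fun M => M.count true
namespace Helper

def cnt (S : Finset ℕ) (M : List Bool) : ℕ :=
  (S.filter fun i => M.getD i false = true).card

def shiftD (S : Finset ℕ) : Finset ℕ := (S.erase 0).image (· - 1)

lemma mem_shiftD {S : Finset ℕ} {i : ℕ} : i ∈ shiftD S ↔ i + 1 ∈ S := by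
  simp only [shiftD, Finset.mem_image, Finset.mem_erase]
  constructor
  · rintro ⟨x, ⟨hx0, hxS⟩, rfl⟩
    have : x - 1 + 1 = x := by omega
    rwa [this]
  · intro h; exact ⟨i + 1, ⟨by omega, h⟩, by omega⟩

lemma card_shiftD (S : Finset ℕ) : (shiftD S).card = (S.erase 0).card :=
  Finset.card_image_of_injOn (fun x hx y hy h => by
    have hx0 : x ≠ 0 := (Finset.mem_erase.mp hx).1
    have hy0 : y ≠ 0 := (Finset.mem_erase.mp hy).1
    omega)

lemma cnt_cons (S : Finset ℕ) (b : Bool) (M : List Bool) :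
    cnt S (b :: M) = (if 0 ∈ S then (if b then 1 else 0) else 0) + cnt (shiftD S) M := by
  have key : (S.erase 0).filter (fun i => (b :: M).getD i false = true)
      = ((shiftD S).filter (fun i => M.getD i false = true)).image (· + 1) := by
    ext i
    simp only [Finset.mem_image, Finset.mem_filter, Finset.mem_erase, mem_shiftD]
    constructor
    · rintro ⟨⟨hi0, hiS⟩, hP⟩
      refine ⟨i - 1, ⟨?_, ?_⟩, by omega⟩
      · rwa [show i - 1 + 1 = i from by omega]
      · rw [show i = i - 1 + 1 from by omega] at hP
        simpa using hP
    · rintro ⟨j, ⟨hj, hQ⟩, rfl⟩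
      exact ⟨⟨by omega, hj⟩, by simpa using hQ⟩
  have hcard : cnt (shiftD S) M
      = ((S.erase 0).filter (fun i => (b :: M).getD i false = true)).card := by
    rw [key, Finset.card_image_of_injective _ (add_left_injective 1)]
    rfl
  have e1 : (S.erase 0).filter (fun i => (b :: M).getD i false = true)
      = (S.filter (fun i => (b :: M).getD i false = true)).erase 0 := by
    ext i
    simp only [Finset.mem_filter, Finset.mem_erase]
    tauto
  rw [cnt, hcard, e1]
  by_cases hm : 0 ∈ S.filter (fun i => (b :: M).getD i false = true)
  · have h0S : 0 ∈ S := (Finset.mem_filter.mp hm).1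
    have hb : b = true := by simpa using (Finset.mem_filter.mp hm).2
    subst hb
    have hc : 1 ≤ (S.filter (fun i => (true :: M).getD i false = true)).card :=
      Finset.card_pos.mpr ⟨0, hm⟩
    rw [Finset.card_erase_of_mem hm, if_pos h0S, if_pos rfl]
    omega
  · rw [Finset.erase_eq_of_notMem hm]
    have : (if 0 ∈ S then (if b then 1 else 0) else 0) = 0 := by
      by_cases h0S : 0 ∈ S
      · cases b
        · simp [h0S]
        · exact absurd (Finset.mem_filter.mpr ⟨h0S, by simp⟩) hm
      · simp [h0S]
    omega

lemma binPMF_zero (p : ℝ) : binPMF p 0 = PMF.pure 0 := by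
  simp [binPMF, maskPMF, PMF.pure_map]

lemma binPMF_succ (p : ℝ) (k : ℕ) :
    binPMF p (k + 1) = (bern p).bind fun b =>
      (binPMF p k).map fun c => (if b then 1 else 0) + c := by
  simp only [binPMF, maskPMF, PMF.map, PMF.bind_bind, PMF.pure_bind]
  refine congrArg _ (funext fun b => congrArg _ (funext fun M => ?_))
  cases b <;> simp [List.count_cons, Nat.add_comm]

/-- The joint PMF of a pair of binomials. -/
def pairBin (p : ℝ) (k l : ℕ) : PMF (ℕ × ℕ) :=
  (binPMF p k).bind fun c => (binPMF p l).map fun d => (c, d)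

lemma pairBin_succ_left (p : ℝ) (k l : ℕ) :
    pairBin p (k + 1) l = (bern p).bind fun b =>
      (pairBin p k l).map fun cd => ((if b then 1 else 0) + cd.1, cd.2) := by
  rw [pairBin, binPMF_succ]
  simp only [PMF.map, PMF.bind_bind, PMF.pure_bind, pairBin, Function.comp]
  rfl

lemma pairBin_succ_right (p : ℝ) (k l : ℕ) :
    pairBin p k (l + 1) = (bern p).bind fun b =>
      (pairBin p k l).map fun cd => (cd.1, (if b then 1 else 0) + cd.2) := by
  rw [pairBin, binPMF_succ]
  simp only [PMF.map, PMF.bind_bind, PMF.pure_bind, Function.comp, Function.comp_def]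
  rw [PMF.bind_comm]
  simp only [pairBin, PMF.map, PMF.bind_bind, PMF.pure_bind, Function.comp, Function.comp_def]

lemma pair_dist (p : ℝ) : ∀ (n : ℕ) (S T : Finset ℕ), Disjoint S T →
    (∀ i ∈ S, i < n) → (∀ i ∈ T, i < n) →
    (maskPMF p n).map (fun M => (cnt S M, cnt T M)) = pairBin p S.card T.card := by
  intro n
  induction n with
  | zero =>
    intro S T _ hS hT
    have hS0 : S = ∅ := Finset.eq_empty_of_forall_notMem fun i hi =>
      Nat.not_lt_zero i (hS i hi)
    have hT0 : T = ∅ := Finset.eq_empty_of_forall_notMem fun i hi =>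
      Nat.not_lt_zero i (hT i hi)
    subst hS0; subst hT0
    simp [maskPMF, pairBin, binPMF_zero, PMF.pure_map, PMF.pure_bind, cnt, Function.comp_def]
  | succ n ih =>
    intro S T hdisj hS hT
    have hS' : ∀ i ∈ shiftD S, i < n := fun i hi => by
      have := hS _ (mem_shiftD.mp hi); omega
    have hT' : ∀ i ∈ shiftD T, i < n := fun i hi => by
      have := hT _ (mem_shiftD.mp hi); omega
    have hdisj' : Disjoint (shiftD S) (shiftD T) := by
      rw [Finset.disjoint_left]
      intro i hiS hiT
      exact (Finset.disjoint_left.mp hdisj) (mem_shiftD.mp hiS) (mem_shiftD.mp hiT)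
    have step : (maskPMF p (n+1)).map (fun M => (cnt S M, cnt T M))
        = (bern p).bind fun b => (pairBin p (shiftD S).card (shiftD T).card).map
            (fun cd => ((if 0 ∈ S then (if b then 1 else 0) else 0) + cd.1,
                        (if 0 ∈ T then (if b then 1 else 0) else 0) + cd.2)) := by
      rw [show maskPMF p (n+1) = (bern p).bind fun b => (maskPMF p n).map fun M => b :: M from rfl]
      simp only [PMF.map, PMF.bind_bind, PMF.pure_bind, Function.comp, Function.comp_def]
      refine congrArg _ (funext fun b => ?_)
      rw [← ih (shiftD S) (shiftD T) hdisj' hS' hT']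
      simp only [PMF.map, PMF.bind_bind, PMF.pure_bind, Function.comp, Function.comp_def]
      refine congrArg _ (funext fun M => ?_)
      rw [cnt_cons, cnt_cons]
    rw [step]
    by_cases h0S : 0 ∈ S
    · have h0T : 0 ∉ T := Finset.disjoint_left.mp hdisj h0S
      have hScard : S.card = (shiftD S).card + 1 := by
        rw [card_shiftD, Finset.card_erase_of_mem h0S]
        have : 1 ≤ S.card := Finset.card_pos.mpr ⟨0, h0S⟩
        omega
      have hTcard : T.card = (shiftD T).card := by
        rw [card_shiftD, Finset.erase_eq_of_notMem h0T]
      rw [hScard, hTcard, pairBin_succ_left]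
      simp [h0S, h0T]
    · by_cases h0T : 0 ∈ T
      · have hScard : S.card = (shiftD S).card := by
          rw [card_shiftD, Finset.erase_eq_of_notMem h0S]
        have hTcard : T.card = (shiftD T).card + 1 := by
          rw [card_shiftD, Finset.card_erase_of_mem h0T]
          have : 1 ≤ T.card := Finset.card_pos.mpr ⟨0, h0T⟩
          omega
        rw [hScard, hTcard, pairBin_succ_right]
        simp [h0S, h0T]
      · have hScard : S.card = (shiftD S).card := by
          rw [card_shiftD, Finset.erase_eq_of_notMem h0S]
        have hTcard : T.card = (shiftD T).card := by
          rw [card_shiftD, Finset.erase_eq_of_notMem h0T]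
        rw [hScard, hTcard]
        simp only [if_neg h0S, if_neg h0T, Nat.zero_add]
        rw [PMF.bind_const]
        exact PMF.map_id _

end Helper
namespace Helper

lemma maskPMF_add (p : ℝ) (j d : ℕ) :
    maskPMF p (j + d) = (maskPMF p j).bind fun M1 =>
      (maskPMF p d).map fun M2 => M1 ++ M2 := by
  induction j with
  | zero =>
    rw [Nat.zero_add]
    show maskPMF p d = (PMF.pure []).bind _
    rw [PMF.pure_bind]
    exact (PMF.map_id _).symm
  | succ j ih =>
    rw [Nat.succ_add]
    show (bern p).bind _ = ((bern p).bind _).bind _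
    rw [ih]
    simp only [PMF.map, PMF.bind_bind, PMF.pure_bind, Function.comp]
    rfl

lemma binPMF_add (p : ℝ) (j d : ℕ) :
    binPMF p (j + d) = (binPMF p j).bind fun c =>
      (binPMF p d).map fun e => c + e := by
  rw [binPMF, maskPMF_add]
  simp only [binPMF, PMF.map, PMF.bind_bind, PMF.pure_bind, Function.comp, List.count_append]

lemma bin_mono (p : ℝ) {j k : ℕ} (h : j ≤ k) (U : Set ℕ)
    (hU : ∀ c ∈ U, ∀ e, c + e ∈ U) :
    (binPMF p j).toOuterMeasure U ≤ (binPMF p k).toOuterMeasure U := by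
  obtain ⟨d, rfl⟩ : ∃ d, k = j + d := ⟨k - j, by omega⟩
  rw [binPMF_add, PMF.toOuterMeasure_bind_apply, PMF.toOuterMeasure_apply]
  refine ENNReal.tsum_le_tsum fun c => ?_
  by_cases hc : c ∈ U
  · rw [Set.indicator_of_mem hc]
    have h1 : ((binPMF p d).map fun e => c + e).toOuterMeasure U = 1 := by
      rw [PMF.toOuterMeasure_map_apply]
      rw [PMF.toOuterMeasure_apply_eq_one_iff]
      intro e _
      exact hU c hc e
    rw [h1, mul_one]
  · rw [Set.indicator_of_notMem hc]
    exact zero_le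

lemma pairBin_fst (p : ℝ) (k l : ℕ) : (pairBin p k l).map Prod.fst = binPMF p k := by
  simp only [pairBin, PMF.map, PMF.bind_bind, PMF.pure_bind, Function.comp]
  have h1 : ∀ c : ℕ, ((binPMF p l).bind fun _ => PMF.pure c) = PMF.pure c :=
    fun c => PMF.bind_const _ _
  calc (binPMF p k).bind (fun c => (binPMF p l).bind fun d => PMF.pure c)
      = (binPMF p k).bind (fun c => PMF.pure c) := by
        exact congrArg _ (funext fun c => h1 c)
    _ = binPMF p k := PMF.bind_pure _

end Helper
namespace Helper

lemma det_bound (X M : List Bool) (m ℓ a₁ a b b₁ : ℕ)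
    (hjE : jExists (maskTrace X M) ℓ m)
    (hi1 : a₁ ≤ originPos M (iIdx (maskTrace X M) ℓ m))
    (hj2 : originPos M (jIdx (maskTrace X M) ℓ m) < b₁) :
    Sval (maskTrace X M) ℓ m ≤
      ((Finset.Ico a b ∪ (Finset.Ico a₁ a ∪ Finset.Ico b b₁)).filter
        fun i => M.getD i false = true ∧ X.getD i false = false).card := by
  set t := maskTrace X M with ht
  set K := keptIdx M with hK
  have hlen : t.length = K.length := by rw [ht, maskTrace, List.length_map]
  have hsort : K.Pairwise (· < ·) := List.Pairwise.filter _ List.pairwise_lt_range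
  have hjlen : jIdx t ℓ m < t.length := by
    have h1 : m < (onesRight t ℓ).length := hjE
    have h2 : (onesRight t ℓ).getD m 0 ∈ onesRight t ℓ := by
      rw [List.getD_eq_getElem _ _ h1]
      exact List.getElem_mem _
    have h3 := (List.mem_filter.mp h2).1
    rw [jIdx]
    exact List.mem_range.mp h3
  have hjK : jIdx t ℓ m < K.length := hlen ▸ hjlen
  -- monotonicity of getElem on K
  have hmono : ∀ k1 k2 : ℕ, ∀ (h1 : k1 < K.length) (h2 : k2 < K.length), k1 ≤ k2 →
      K[k1] ≤ K[k2] := by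
    intro k1 k2 h1 h2 hle
    rcases Nat.lt_or_ge k1 k2 with hlt | hge
    · exact le_of_lt (hsort.rel_get_of_lt (show (⟨k1, h1⟩ : Fin K.length) < ⟨k2, h2⟩ from hlt))
    · have : k1 = k2 := le_antisymm hle hge
      subst this
      exact le_refl _
  have horig : ∀ k (h : k < K.length), originPos M k = K[k] := by
    intro k h
    rw [originPos, ← hK, List.getD_eq_getElem _ _ h]
  rw [Sval]
  have hnodup : ((List.range t.length).filter fun k =>
      decide (iIdx t ℓ m ≤ k) && decide (k ≤ jIdx t ℓ m) && !(t.getD k true)).Nodup :=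
    List.nodup_range.filter _
  rw [← List.toFinset_card_of_nodup hnodup]
  apply Finset.card_le_card_of_injOn (fun k => originPos M k)
  · intro k hk
    rw [Finset.mem_coe, List.mem_toFinset, List.mem_filter] at hk
    obtain ⟨hkr, hq⟩ := hk
    have hkN : k < t.length := List.mem_range.mp hkr
    simp only [Bool.and_eq_true, decide_eq_true_eq, Bool.not_eq_true'] at hq
    obtain ⟨⟨hik, hkj⟩, hkv⟩ := hq
    have hkK : k < K.length := hlen ▸ hkN
    have hiK : iIdx t ℓ m < K.length := lt_of_le_of_lt hik hkK
    -- positions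
    have hoi := horig _ hiK
    have hoj := horig _ hjK
    have hok := horig _ hkK
    have hlow : a₁ ≤ K[k] := by
      rw [hoi] at hi1
      exact le_trans hi1 (hmono _ _ hiK hkK hik)
    have hhigh : K[k] < b₁ := by
      rw [hoj] at hj2
      exact lt_of_le_of_lt (hmono _ _ hkK hjK hkj) hj2
    -- kept
    have hmem : K[k] ∈ K := List.getElem_mem _
    have hkept : M.getD K[k] false = true := by
      have hmem2 : K[k] ∈ (List.range M.length).filter (fun i => M.getD i false) := hmem
      have := (List.mem_filter.mp hmem2).2
      simpa using this
    -- X value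
    have hxval : X.getD K[k] false = false := by
      have hkN' : k < ((keptIdx M).map (fun i => X.getD i false)).length := by
        rw [List.length_map]
        exact hkK
      have heval : t.getD k true = X.getD K[k] false := by
        show (maskTrace X M).getD k true = _
        rw [maskTrace, List.getD_eq_getElem _ _ hkN', List.getElem_map]
      rw [← heval]
      exact hkv
    rw [Finset.mem_coe]
    show originPos M k ∈ _
    rw [hok]
    refine Finset.mem_filter.mpr ⟨?_, hkept, hxval⟩
    simp only [Finset.mem_union, Finset.mem_Ico]
    omega
  · intro k1 hk1 k2 hk2 heq
    simp only [List.coe_toFinset, Set.mem_setOf_eq, List.mem_filter, List.mem_range] at hk1 hk2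
    obtain ⟨h1, -⟩ := hk1
    obtain ⟨h2, -⟩ := hk2
    have h1K : k1 < K.length := hlen ▸ h1
    have h2K : k2 < K.length := hlen ▸ h2
    have heq' : originPos M k1 = originPos M k2 := heq
    rw [horig _ h1K, horig _ h2K] at heq' 
    rcases Nat.lt_trichotomy k1 k2 with hlt | heqq | hgt
    · have := hsort.rel_get_of_lt (show (⟨k1, h1K⟩ : Fin K.length) < ⟨k2, h2K⟩ from hlt)
      simp only [List.get_eq_getElem] at this
      omega
    · exact heqq
    · have := hsort.rel_get_of_lt (show (⟨k2, h2K⟩ : Fin K.length) < ⟨k1, h1K⟩ from hgt)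
      simp only [List.get_eq_getElem] at this
      omega

end Helper

/-- Property 2: (i) deterministically, `S(X̃,ℓ) ≤ Z + W` whenever `ℓ` carries a `0`
originating in the `0`-run `r = [a,b)` of `Y` and `i_ℓ, j_ℓ` exist and originate in the
two adjacent `1`-runs of `Y`; (ii) `Z ~ Bin(r_X^0, p)`, and `Z + W` is stochastically
dominated by the sum of independent `Bin(r_X^0, p)` and `Bin(2m, p)` variables. -/
theorem S_dominated_by_binomials
    (q ε C' : ℝ) (hq0 : 0 < q) (hq1 : q < 1) (hε0 : 0 < ε) (hε1 : ε < 1)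
    (hpε : 3 * ε < 1 - q) (hC : 1000 / (1 - q) ≤ C')
    (n : ℕ) (hn : 2 ≤ n) (m : ℕ) (hm : m = ⌈ε * C' * logq q n⌉₊)
    (Y X : List Bool) (hYlen : Y.length = n)
    (hY1 : ∀ a b, IsRun Y a b true → C' * logq q n / ε ≤ (b : ℝ) - a)
    (hY0 : ∀ a b, IsRun Y a b false →
      (b : ℝ) - a < C' * logq q n ∨ 3 * C' * logq q n < (b : ℝ) - a)
    (hmod : ModifiedRuns Y X m)
    (a₁ a b b₁ : ℕ) (hr : IsRun Y a b false)
    (hrl : IsRun Y a₁ a true) (hrr : IsRun Y b b₁ true)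
    (Z W : List Bool → ℕ) (rX0 : ℕ)
    (hZ : Z = fun M => ((Finset.Ico a b).filter fun i =>
      M.getD i false = true ∧ X.getD i false = false).card)
    (hW : W = fun M => ((Finset.Ico a₁ a ∪ Finset.Ico b b₁).filter fun i =>
      M.getD i false = true ∧ X.getD i false = false).card)
    (hrX0 : rX0 = ((Finset.Ico a b).filter fun i => X.getD i false = false).card) :
    (∀ M : List Bool, M.length = n → ∀ ℓ, ℓ < (maskTrace X M).length →
      (maskTrace X M).getD ℓ true = false →
      a ≤ originPos M ℓ → originPos M ℓ < b →
      iExists (maskTrace X M) ℓ m → jExists (maskTrace X M) ℓ m →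
      a₁ ≤ originPos M (iIdx (maskTrace X M) ℓ m) →
      originPos M (iIdx (maskTrace X M) ℓ m) < a →
      b ≤ originPos M (jIdx (maskTrace X M) ℓ m) →
      originPos M (jIdx (maskTrace X M) ℓ m) < b₁ →
      Sval (maskTrace X M) ℓ m ≤ Z M + W M) ∧
    (maskPMF (1 - q) n).map Z = binPMF (1 - q) rX0 ∧
    (∀ t : ℕ, (maskPMF (1 - q) n).toOuterMeasure {M | t ≤ Z M + W M} ≤
      ((binPMF (1 - q) rX0).bind fun b1 =>
        (binPMF (1 - q) (2 * m)).map fun b2 => b1 + b2).toOuterMeasure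
        {s | t ≤ s}) := by
  classical
  -- the sets of positions carrying a `0` of `X` in the run `r` and in the
  -- adjacent `1`-runs, respectively
  set A : Finset ℕ := (Finset.Ico a b).filter (fun i => X.getD i false = false) with hA
  set B : Finset ℕ := ((Finset.Ico a₁ a ∪ Finset.Ico b b₁).filter
    fun i => X.getD i false = false) with hB
  have hbn : b ≤ n := hYlen ▸ hr.2.1
  have hab : a < b := hr.1
  have ha1a' : a₁ < a := hrl.1
  have hbb1 : b < b₁ := hrr.1
  have hb1n : b₁ ≤ n := hYlen ▸ hrr.2.1
  have hZcnt : ∀ M, Z M = Helper.cnt A M := by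
    intro M
    rw [hZ, Helper.cnt, hA, Finset.filter_filter]
    exact congrArg Finset.card (Finset.filter_congr fun i _ => by tauto)
  have hWcnt : ∀ M, W M = Helper.cnt B M := by
    intro M
    rw [hW, Helper.cnt, hB, Finset.filter_filter]
    exact congrArg Finset.card (Finset.filter_congr fun i _ => by tauto)
  have hAcard : A.card = rX0 := hrX0.symm
  have hAsub : ∀ i ∈ A, i < n := by
    intro i hi
    have h1 := Finset.mem_Ico.mp (Finset.mem_filter.mp hi).1
    omega
  have hBsub : ∀ i ∈ B, i < n := by
    intro i hi
    have h1 := (Finset.mem_filter.mp hi).1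
    rw [Finset.mem_union] at h1
    have ha1a : a₁ < a := hrl.1
    rcases h1 with h1 | h1 <;> (have := Finset.mem_Ico.mp h1; omega)
  have hdisj : Disjoint A B := by
    rw [Finset.disjoint_left]
    intro i hiA hiB
    have h1 := Finset.mem_Ico.mp (Finset.mem_filter.mp hiA).1
    have h2 := (Finset.mem_filter.mp hiB).1
    rw [Finset.mem_union] at h2
    rcases h2 with h2 | h2 <;> (have := Finset.mem_Ico.mp h2; omega)
  have hjoint := Helper.pair_dist (1 - q) n A B hdisj hAsub hBsub
  have hBcard : B.card ≤ 2 * m := by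
    have hsplit : B = ((Finset.Ico a₁ a).filter fun i => X.getD i false = false) ∪
        ((Finset.Ico b b₁).filter fun i => X.getD i false = false) := by
      rw [hB, Finset.filter_union]
    have hL : ((Finset.Ico a₁ a).filter fun i => X.getD i false = false) ⊆
        ((Finset.Ico a₁ a).filter fun i => X.getD i false ≠ Y.getD i false) := by
      intro i hi
      obtain ⟨hmem, hx⟩ := Finset.mem_filter.mp hi
      have hy : Y.getD i false = true :=
        hrl.2.2.1 i (Finset.mem_Ico.mp hmem).1 (Finset.mem_Ico.mp hmem).2
      refine Finset.mem_filter.mpr ⟨hmem, ?_⟩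
      rw [hx, hy]
      simp
    have hR : ((Finset.Ico b b₁).filter fun i => X.getD i false = false) ⊆
        ((Finset.Ico b b₁).filter fun i => X.getD i false ≠ Y.getD i false) := by
      intro i hi
      obtain ⟨hmem, hx⟩ := Finset.mem_filter.mp hi
      have hy : Y.getD i false = true :=
        hrr.2.2.1 i (Finset.mem_Ico.mp hmem).1 (Finset.mem_Ico.mp hmem).2
      refine Finset.mem_filter.mpr ⟨hmem, ?_⟩
      rw [hx, hy]
      simp
    calc B.card ≤ ((Finset.Ico a₁ a).filter fun i => X.getD i false = false).card +
          ((Finset.Ico b b₁).filter fun i => X.getD i false = false).card := by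
            rw [hsplit]; exact Finset.card_union_le _ _
      _ ≤ m + m := add_le_add
          (le_trans (Finset.card_le_card hL) (hmod.2 a₁ a true hrl))
          (le_trans (Finset.card_le_card hR) (hmod.2 b b₁ true hrr))
      _ = 2 * m := by omega
  refine ⟨?_, ?_, ?_⟩
  · -- (i) deterministic bound
    intro M hMlen ℓ hℓ hval h1 h2 hiE hjE hii1 hii2 hjj1 hjj2
    have hdet := Helper.det_bound X M m ℓ a₁ a b b₁ hjE hii1 hjj2
    refine le_trans hdet ?_
    rw [Finset.filter_union, hZ, hW]
    exact Finset.card_union_le _ _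
  · -- (ii) distribution of Z
    have hZfun : Z = fun M => Helper.cnt A M := funext hZcnt
    rw [hZfun]
    calc (maskPMF (1 - q) n).map (fun M => Helper.cnt A M)
        = ((maskPMF (1 - q) n).map
            (fun M => (Helper.cnt A M, Helper.cnt B M))).map Prod.fst := by
          rw [PMF.map_comp]
          rfl
      _ = (Helper.pairBin (1 - q) A.card B.card).map Prod.fst := by rw [hjoint]
      _ = binPMF (1 - q) A.card := Helper.pairBin_fst _ _ _
      _ = binPMF (1 - q) rX0 := by rw [hAcard]
  · -- (iii) stochastic domination
    intro t
    have hset : {M : List Bool | t ≤ Z M + W M} =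
        (fun M => (Helper.cnt A M, Helper.cnt B M)) ⁻¹'
          {cd : ℕ × ℕ | t ≤ cd.1 + cd.2} := by
      ext M
      simp only [Set.mem_setOf_eq, Set.mem_preimage, hZcnt M, hWcnt M]
    calc (maskPMF (1 - q) n).toOuterMeasure {M | t ≤ Z M + W M}
        = ((maskPMF (1 - q) n).map
            (fun M => (Helper.cnt A M, Helper.cnt B M))).toOuterMeasure
              {cd : ℕ × ℕ | t ≤ cd.1 + cd.2} := by
          rw [PMF.toOuterMeasure_map_apply, hset]
      _ = (Helper.pairBin (1 - q) A.card B.card).toOuterMeasure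
            {cd : ℕ × ℕ | t ≤ cd.1 + cd.2} := by rw [hjoint]
      _ = ∑' c, (binPMF (1 - q) A.card) c *
            (binPMF (1 - q) B.card).toOuterMeasure {d | t ≤ c + d} := by
          rw [Helper.pairBin, PMF.toOuterMeasure_bind_apply]
          refine tsum_congr fun c => ?_
          rw [PMF.toOuterMeasure_map_apply]
          rfl
      _ ≤ ∑' c, (binPMF (1 - q) A.card) c *
            (binPMF (1 - q) (2 * m)).toOuterMeasure {d | t ≤ c + d} := by
          refine ENNReal.tsum_le_tsum fun c => mul_le_mul_right ?_ _
          refine Helper.bin_mono _ hBcard _ ?_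
          intro x hx e
          simp only [Set.mem_setOf_eq] at hx ⊢
          omega
      _ = ((binPMF (1 - q) rX0).bind fun b1 =>
            (binPMF (1 - q) (2 * m)).map fun b2 => b1 + b2).toOuterMeasure
            {s | t ≤ s} := by
          rw [PMF.toOuterMeasure_bind_apply, hAcard]
          refine tsum_congr fun c => ?_
          rw [PMF.toOuterMeasure_map_apply]
          rfl
end
end

section
/- Let X be a binary string with |X| ≥ L such that at least a (1 − ε) fraction of the bits of X equal a fixed value v ∈ {0,1}, and let X̃ be a single trace of X. Then with probability at least 1 − n^{−4}, the number of bits of X̃ not equal to v is at most 2ε|X̃|. -/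
open scoped ENNReal Classical
set_option maxHeartbeats 1000000

noncomputable section

/-- The distribution of a trace of `X` through the deletion channel with
retention probability `p`: each bit is kept independently with probability `p`,
and the surviving bits are concatenated. -/
def tracePMF (p : ℝ) : List Bool → PMF (List Bool)
  | [] => PMF.pure []
  | b :: xs => (bern p).bind fun keep =>
      (tracePMF p xs).map fun t => if keep then b :: t else t

lemma tsum_pmf_map {α β : Type*} (Q : PMF α) (h : α → β) (w : β → ℝ≥0∞) :
    ∑' b, Q.map h b * w b = ∑' a, Q a * w (h a) := by
  simp only [PMF.map_apply]
  calc ∑' b, (∑' a, if b = h a then Q a else 0) * w b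
      = ∑' b, ∑' a, (if b = h a then Q a * w (h a) else 0) := by
        congr 1; funext b
        rw [← ENNReal.tsum_mul_right]
        congr 1; funext a
        split_ifs with hb
        · subst hb; rfl
        · simp
    _ = ∑' a, ∑' b, (if b = h a then Q a * w (h a) else 0) := ENNReal.tsum_comm
    _ = ∑' a, Q a * w (h a) := by
        congr 1; funext a
        exact tsum_ite_eq (h a) _

lemma tsum_pmf_bind {α β : Type*} (Q : PMF α) (g : α → PMF β) (w : β → ℝ≥0∞) :
    ∑' b, Q.bind g b * w b = ∑' a, Q a * ∑' b, g a b * w b := by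
  simp only [PMF.bind_apply]
  calc ∑' b, (∑' a, Q a * g a b) * w b
      = ∑' b, ∑' a, Q a * g a b * w b := by
        congr 1; funext b; rw [ENNReal.tsum_mul_right]
    _ = ∑' a, ∑' b, Q a * g a b * w b := ENNReal.tsum_comm
    _ = ∑' a, Q a * ∑' b, g a b * w b := by
        congr 1; funext a; rw [← ENNReal.tsum_mul_left]; simp [mul_assoc]

lemma bern_true {p : ℝ} (hp1 : p ≤ 1) : bern p true = ENNReal.ofReal p := by
  simp [bern, min_eq_left (Real.toNNReal_le_one.2 hp1), ENNReal.ofReal, PMF.bernoulli_apply]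

lemma bern_false {p : ℝ} (hp1 : p ≤ 1) : bern p false = 1 - ENNReal.ofReal p := by
  simp [bern, min_eq_left (Real.toNNReal_le_one.2 hp1), ENNReal.ofReal, PMF.bernoulli_apply]

lemma trace_exp (p : ℝ) (hp1 : p ≤ 1) (f : Bool → ℝ≥0∞) :
    ∀ X : List Bool, (∑' t, tracePMF p X t * (t.map f).prod)
      = (X.map fun b => (1 - ENNReal.ofReal p) + ENNReal.ofReal p * f b).prod
  | [] => by
    simp only [tracePMF, List.map_nil, List.prod_nil]
    rw [tsum_eq_single ([] : List Bool)]
    · simp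
    · intro t ht; simp [PMF.pure_apply, ht]
  | b :: xs => by
    simp only [tracePMF]
    rw [tsum_pmf_bind]
    rw [tsum_bool]
    rw [tsum_pmf_map, tsum_pmf_map]
    simp only [if_true, if_false, List.map_cons, List.prod_cons]
    rw [bern_true hp1, bern_false hp1]
    norm_num
    have h2 : ∑' (a : List Bool), (tracePMF p xs) a * (f b * (List.map f a).prod)
        = f b * ∑' (a : List Bool), (tracePMF p xs) a * (List.map f a).prod := by
      rw [← ENNReal.tsum_mul_left]; congr 1; funext a; ring
    rw [h2, trace_exp p hp1 f xs]
    ring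


lemma prod_map_count (r : ℝ≥0∞) (v : Bool) :
    ∀ t : List Bool, (t.map fun b => if b = v then r else 1).prod = r ^ (t.count v)
  | [] => by simp
  | a :: t => by
    simp only [List.map_cons, List.prod_cons, List.count_cons, prod_map_count r v t]
    by_cases h : a = v
    · simp [h, pow_succ]; ring
    · simp [h, Ne.symm h]

lemma prod_map_const {α : Type*} (s : ℝ≥0∞) :
    ∀ t : List α, (t.map fun _ => s).prod = s ^ t.length
  | [] => by simp
  | a :: t => by
    simp only [List.map_cons, List.prod_cons, List.length_cons, prod_map_const s t, pow_succ]
    ring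

lemma count_add_count_not (v : Bool) (X : List Bool) :
    X.count v + X.count (!v) = X.length := by
  induction X with
  | nil => simp
  | cons a t ih =>
    cases v <;> cases a <;> simp only [Bool.not_true, Bool.not_false, List.count_cons,
      List.length_cons, beq_self_eq_true, beq_iff_eq] at ih ⊢ <;> simp <;> omega

lemma pmf_markov {α : Type*} (Q : PMF α) (w : α → ℝ≥0∞) (S : Set α) (c : ℝ≥0∞)
    (hc : ∀ a ∈ S, c ≤ w a) : Q.toOuterMeasure S * c ≤ ∑' a, Q a * w a := by
  rw [PMF.toOuterMeasure_apply, ← ENNReal.tsum_mul_right]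
  refine ENNReal.tsum_le_tsum fun a => ?_
  by_cases h : a ∈ S
  · rw [Set.indicator_of_mem h]
    exact mul_le_mul_right (hc a h) _
  · simp [Set.indicator_of_notMem h]

lemma pmf_compl {α : Type*} (Q : PMF α) (S : Set α) :
    Q.toOuterMeasure S + Q.toOuterMeasure Sᶜ = 1 := by
  rw [PMF.toOuterMeasure_apply, PMF.toOuterMeasure_apply, ← ENNReal.tsum_add]
  rw [← PMF.tsum_coe Q]
  congr 1; funext a
  by_cases h : a ∈ S <;> simp [Set.indicator, h]

/-- For a string of length at least `L = (50/(p²ε²)) ln n` with a `1-ε` fraction of its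
bits equal to `v`, with probability at least `1 - n⁻⁴` a trace `X̃` has at most `2ε|X̃|`
bits not equal to `v`. -/
theorem trace_density_preserved
    (q ε : ℝ) (hq0 : 0 < q) (hq1 : q < 1) (hε0 : 0 < ε) (hε1 : ε < 1)
    (n : ℕ) (hn : 2 ≤ n) (L : ℝ) (hL : L = 50 / ((1 - q) ^ 2 * ε ^ 2) * Real.log n)
    (X : List Bool) (hXlen : L ≤ (X.length : ℝ)) (v : Bool)
    (hdens : (1 - ε) * (X.length : ℝ) ≤ (X.count v : ℝ)) :
    1 - 1 / (n : ℝ≥0∞) ^ 4 ≤ (tracePMF (1 - q) X).toOuterMeasure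
      {t | (t.count (!v) : ℝ) ≤ 2 * ε * (t.length : ℝ)} := by
  set p : ℝ := 1 - q with hp
  set Q := tracePMF p X with hQ
  set S : Set (List Bool) := {t | (t.count (!v) : ℝ) ≤ 2 * ε * (t.length : ℝ)} with hS
  clear_value p Q S
  by_cases hhalf : 1 ≤ 2 * ε
  · have hSuniv : S = Set.univ := by
      refine Set.eq_univ_of_forall fun t => ?_
      have h1 : (t.count (!v) : ℝ) ≤ (t.length : ℝ) := by
        exact_mod_cast (List.count_le_length : t.count (!v) ≤ t.length)
      have h2 : (t.length : ℝ) ≤ 2 * ε * (t.length : ℝ) := by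
        have h0 : (0:ℝ) ≤ (t.length : ℝ) := Nat.cast_nonneg _
        nlinarith
      show t ∈ S
      rw [hS]
      exact le_trans h1 h2
    rw [hSuniv]
    rw [show Q.toOuterMeasure Set.univ = 1 from ?_]
    · exact tsub_le_self
    · rw [PMF.toOuterMeasure_apply]
      simp [Q.tsum_coe]
  -- main case
  push_neg at hhalf
  have hp0 : (0:ℝ) < p := by simp [hp]; linarith
  have hp1 : p ≤ 1 := by simp [hp]; linarith
  have hn1 : (1:ℝ) < (n:ℝ) := by exact_mod_cast Nat.lt_of_lt_of_le one_lt_two hn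
  have hn2 : (2:ℝ) ≤ (n:ℝ) := by exact_mod_cast hn
  have hlog : 0 < Real.log n := Real.log_pos hn1
  set mR : ℝ := (X.length : ℝ) with hmR
  clear_value mR
  have hmL : 50 / (p ^ 2 * ε ^ 2) * Real.log n ≤ mR := by rw [hL] at hXlen; exact hXlen
  have hm0 : 0 < mR := by
    have : 0 < 50 / (p ^ 2 * ε ^ 2) * Real.log n := by positivity
    linarith
  set a : ℕ := X.count (!v) with ha
  clear_value a
  have haε : (a : ℝ) ≤ ε * mR := by
    have hc := count_add_count_not v X
    have h2 : (X.count v : ℝ) + (a : ℝ) = mR := by rw [ha, hmR]; exact_mod_cast hc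
    linarith
  have hmLmul : 50 * Real.log n ≤ mR * (p ^ 2 * ε ^ 2) := by
    rw [div_mul_eq_mul_div, div_le_iff₀ (by positivity)] at hmL
    linarith
  have hpεm : 100 * Real.log n ≤ p * ε * mR := by
    have hpe2 : p * ε ≤ 1 / 2 := by nlinarith
    have hu0 : (0:ℝ) ≤ p * ε * mR := by positivity
    nlinarith [mul_le_mul_of_nonneg_left hpe2 hu0]
  have hpm : 200 * Real.log n ≤ p * mR := by
    have hpe2 : p * ε ^ 2 ≤ 1 / 4 := by nlinarith [sq_nonneg ε]
    have hu0 : (0:ℝ) ≤ p * mR := by positivity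
    nlinarith [mul_le_mul_of_nonneg_left hpe2 hu0]
  set β : ℝ := 3 / 2 * (p * ε * mR) with hβ
  set τ : ℝ := 3 / 4 * (p * mR) with hτ
  set S1 : Set (List Bool) := {t | β < (t.count (!v) : ℝ)} with hS1
  set S2 : Set (List Bool) := {t | (t.length : ℝ) < τ} with hS2
  clear_value β τ S1 S2
  have hsub : Sᶜ ⊆ S1 ∪ S2 := by
    intro t ht
    by_contra hcon
    rw [Set.mem_union] at hcon
    push_neg at hcon
    obtain ⟨h1, h2⟩ := hcon
    simp only [hS1, hS2, Set.mem_setOf_eq, not_lt] at h1 h2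
    apply ht
    simp only [hS, Set.mem_setOf_eq]
    calc (t.count (!v) : ℝ) ≤ β := h1
      _ = 2 * ε * τ := by rw [hβ, hτ]; ring
      _ ≤ 2 * ε * (t.length : ℝ) :=
          mul_le_mul_of_nonneg_left h2 (by linarith : (0:ℝ) ≤ 2 * ε)
  have htail : ENNReal.ofReal (1 / (2 * (n:ℝ) ^ 4)) + ENNReal.ofReal (1 / (2 * (n:ℝ) ^ 4))
      = 1 / (n : ℝ≥0∞) ^ 4 := by
    rw [← ENNReal.ofReal_add (by positivity) (by positivity)]
    rw [show 1 / (2 * (n:ℝ) ^ 4) + 1 / (2 * (n:ℝ) ^ 4) = ((n:ℝ) ^ 4)⁻¹ by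
      field_simp; ring]
    rw [ENNReal.ofReal_inv_of_pos (by positivity), ENNReal.ofReal_pow (by positivity),
      ENNReal.ofReal_natCast, one_div]
  have hbound1 : Q.toOuterMeasure S1 ≤ ENNReal.ofReal (1 / (2 * (n:ℝ) ^ 4)) := by
    set r : ℝ≥0∞ := ENNReal.ofReal (3/2) with hr
    have hr1 : 1 ≤ r := by rw [hr]; exact ENNReal.one_le_ofReal.2 (by norm_num)
    have hβ0 : 0 ≤ β := by rw [hβ]; positivity
    have hmar := pmf_markov Q (fun t => (t.map fun b => if b = !v then r else 1).prod) S1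
        (r ^ β) ?_
    swap
    · intro t ht
      beta_reduce
      rw [prod_map_count r (!v) t, ← ENNReal.rpow_natCast]
      refine ENNReal.rpow_le_rpow_of_exponent_le hr1 ?_
      rw [hS1] at ht
      exact_mod_cast le_of_lt ht
    have hsub1 : (1 : ℝ≥0∞) - ENNReal.ofReal p = ENNReal.ofReal (1 - p) := by
      rw [ENNReal.ofReal_sub 1 (le_of_lt hp0), ENNReal.ofReal_one]
    have hE : (∑' t, Q t * ((t.map fun b => if b = !v then r else 1).prod))
        = ENNReal.ofReal (1 + p/2) ^ a := by
      rw [hQ, trace_exp p hp1 _ X]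
      rw [show (fun b => (1 - ENNReal.ofReal p)
            + ENNReal.ofReal p * (if b = !v then r else 1))
          = fun b => if b = !v then ENNReal.ofReal (1 + p/2) else 1 from ?_]
      · rw [prod_map_count, ← ha]
      · funext b
        by_cases hb : b = !v
        · simp only [hb, if_true, hr, hsub1]
          rw [← ENNReal.ofReal_mul (le_of_lt hp0), ← ENNReal.ofReal_add (by linarith) (by positivity)]
          congr 1; ring
        · simp only [hb, if_false, mul_one]
          rw [tsub_add_cancel_of_le (ENNReal.ofReal_le_one.2 hp1)]
    rw [hE] at hmar
    have hr0 : r ≠ 0 := by rw [hr]; simp [ENNReal.ofReal_pos]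
    have hrt : r ≠ ⊤ := by rw [hr]; exact ENNReal.ofReal_ne_top
    have hc0 : r ^ β ≠ 0 := by
      simp [ENNReal.rpow_eq_zero_iff, hr0, hrt]
    have hct : r ^ β ≠ ⊤ := by
      simp [ENNReal.rpow_eq_top_iff, hr0, hrt]
    have hμ : Q.toOuterMeasure S1 ≤ (ENNReal.ofReal (1 + p/2) ^ a) / r ^ β :=
      (ENNReal.le_div_iff_mul_le (Or.inl hc0) (Or.inl hct)).2 hmar
    refine le_trans hμ ?_
    rw [hr, ENNReal.ofReal_rpow_of_pos (by norm_num), ← ENNReal.ofReal_pow (by positivity),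
      ← ENNReal.ofReal_div_of_pos (by positivity)]
    apply ENNReal.ofReal_le_ofReal
    -- real estimate
    have hpεm0 : (0:ℝ) ≤ p * ε * mR := by positivity
    have e1 : (1 + p/2)^a ≤ Real.exp (p * ε * mR / 2) := by
      have hstep : (1 + p/2) ≤ Real.exp (p/2) := by
        have := Real.add_one_le_exp (p/2)
        linarith
      calc (1 + p/2)^a ≤ Real.exp (p/2) ^ a :=
            pow_le_pow_left₀ (by positivity) hstep a
        _ = Real.exp (a * (p/2)) := (Real.exp_nat_mul _ a).symm
        _ ≤ Real.exp (p * ε * mR / 2) := by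
            refine Real.exp_le_exp.2 ?_
            have h := mul_le_mul_of_nonneg_left haε (by positivity : (0:ℝ) ≤ p/2)
            nlinarith
    have hlog32 : (2/5 : ℝ) ≤ Real.log (3/2) := by
      rw [Real.le_log_iff_exp_le (by norm_num)]
      refine le_of_pow_le_pow_left₀ (by norm_num : (5:ℕ) ≠ 0) (by norm_num) ?_
      have h5 : Real.exp (2/5) ^ 5 = Real.exp 1 ^ 2 := by
        rw [← Real.exp_nat_mul, ← Real.exp_nat_mul]; norm_num
      rw [h5]
      nlinarith [Real.exp_one_lt_d9, Real.exp_pos 1]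
    have e2 : Real.exp (3/5 * (p * ε * mR)) ≤ (3/2 : ℝ) ^ β := by
      rw [Real.rpow_def_of_pos (by norm_num)]
      refine Real.exp_le_exp.2 ?_
      rw [hβ]
      nlinarith
    calc (1 + p/2)^a / (3/2:ℝ)^β
        ≤ Real.exp (p*ε*mR/2) / Real.exp (3/5 * (p*ε*mR)) :=
          div_le_div₀ (Real.exp_pos _).le e1 (Real.exp_pos _) e2
      _ = Real.exp (p*ε*mR/2 - 3/5 * (p*ε*mR)) := (Real.exp_sub _ _).symm
      _ ≤ Real.exp (-(10 * Real.log n)) := Real.exp_le_exp.2 (by nlinarith)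
      _ ≤ 1 / (2*(n:ℝ)^4) := by
          rw [Real.exp_neg, show (10:ℝ) * Real.log n = Real.log ((n:ℝ)^10) by
            rw [Real.log_pow]; push_cast; ring]
          rw [Real.exp_log (by positivity), one_div]
          apply inv_anti₀ (by positivity)
          have h6 : (2:ℝ) ≤ (n:ℝ)^6 := by
            calc (2:ℝ) ≤ 2^6 := by norm_num
              _ ≤ (n:ℝ)^6 := pow_le_pow_left₀ (by norm_num) hn2 6
          nlinarith [pow_nonneg (by linarith : (0:ℝ) ≤ (n:ℝ)) 4]
  have hbound2 : Q.toOuterMeasure S2 ≤ ENNReal.ofReal (1 / (2 * (n:ℝ) ^ 4)) := by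
    set s : ℝ≥0∞ := ENNReal.ofReal (Real.exp (-(1/4:ℝ))) with hs
    have hs1 : s ≤ 1 := by
      rw [hs]
      exact ENNReal.ofReal_le_one.2 ((Real.exp_le_exp.2 (by norm_num)).trans_eq Real.exp_zero)
    have hτ0 : 0 ≤ τ := by rw [hτ]; positivity
    have hmar := pmf_markov Q (fun t => (t.map fun _ => s).prod) S2 (s ^ τ) ?_
    swap
    · intro t ht
      beta_reduce
      rw [prod_map_const s t, ← ENNReal.rpow_natCast]
      refine ENNReal.rpow_le_rpow_of_exponent_ge hs1 ?_
      rw [hS2] at ht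
      exact le_of_lt ht
    set c2 : ℝ := 1 - p + p * Real.exp (-(1/4:ℝ)) with hc2
    have hc2pos : 0 < c2 := by
      rw [hc2]
      have := Real.exp_pos (-(1/4:ℝ))
      nlinarith
    have hsub1 : (1 : ℝ≥0∞) - ENNReal.ofReal p = ENNReal.ofReal (1 - p) := by
      rw [ENNReal.ofReal_sub 1 (le_of_lt hp0), ENNReal.ofReal_one]
    have hE : (∑' t, Q t * ((t.map fun _ => s).prod)) = ENNReal.ofReal c2 ^ X.length := by
      rw [hQ, trace_exp p hp1 _ X]
      rw [show (fun _ : Bool => (1 - ENNReal.ofReal p) + ENNReal.ofReal p * s)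
          = fun _ : Bool => ENNReal.ofReal c2 from ?_]
      · rw [prod_map_const]
      · funext b
        rw [hs, hsub1, ← ENNReal.ofReal_mul (le_of_lt hp0),
          ← ENNReal.ofReal_add (by linarith) (by positivity)]
    rw [hE] at hmar
    have hs0 : s ≠ 0 := by rw [hs]; simp [Real.exp_pos]
    have hst : s ≠ ⊤ := by rw [hs]; exact ENNReal.ofReal_ne_top
    have hc0 : s ^ τ ≠ 0 := by simp [ENNReal.rpow_eq_zero_iff, hs0, hst]
    have hct : s ^ τ ≠ ⊤ := by simp [ENNReal.rpow_eq_top_iff, hs0, hst]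
    have hμ : Q.toOuterMeasure S2 ≤ (ENNReal.ofReal c2 ^ X.length) / s ^ τ :=
      (ENNReal.le_div_iff_mul_le (Or.inl hc0) (Or.inl hct)).2 hmar
    refine le_trans hμ ?_
    rw [hs, ENNReal.ofReal_rpow_of_pos (Real.exp_pos _),
      ← ENNReal.ofReal_pow (le_of_lt hc2pos),
      ← ENNReal.ofReal_div_of_pos (by positivity)]
    apply ENNReal.ofReal_le_ofReal
    -- real estimate
    have hrpowexp : Real.exp (-(1/4:ℝ)) ^ τ = Real.exp (-(1/4) * τ) := by
      rw [Real.rpow_def_of_pos (Real.exp_pos _), Real.log_exp]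
    have hexp14 : Real.exp (-(1/4:ℝ)) ≤ 25/32 := by
      have h4 : Real.exp (1/4:ℝ) ^ 4 = Real.exp 1 := by
        rw [← Real.exp_nat_mul]; norm_num
      have h32 : (32/25:ℝ) ≤ Real.exp (1/4) := by
        refine le_of_pow_le_pow_left₀ (by norm_num : (4:ℕ) ≠ 0) (Real.exp_pos _).le ?_
        rw [h4]
        nlinarith [Real.exp_one_gt_d9]
      rw [Real.exp_neg]
      calc (Real.exp (1/4:ℝ))⁻¹ ≤ (32/25:ℝ)⁻¹ := by
            apply inv_anti₀ (by norm_num) h32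
        _ = 25/32 := by norm_num
    have hc2exp : c2 ≤ Real.exp (-(7/32) * p) := by
      have h1 : c2 ≤ 1 - (7/32) * p := by
        rw [hc2]
        have := mul_le_mul_of_nonneg_left hexp14 (le_of_lt hp0)
        linarith
      have h2 := Real.add_one_le_exp (-(7/32) * p)
      linarith
    have e1 : c2 ^ X.length ≤ Real.exp (-(7/32) * p * mR) := by
      calc c2 ^ X.length ≤ Real.exp (-(7/32) * p) ^ X.length :=
            pow_le_pow_left₀ (le_of_lt hc2pos) hc2exp _
        _ = Real.exp (X.length * (-(7/32) * p)) := (Real.exp_nat_mul _ _).symm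
        _ = Real.exp (-(7/32) * p * mR) := by rw [hmR]; ring_nf
    calc c2 ^ X.length / Real.exp (-(1/4:ℝ)) ^ τ
        = c2 ^ X.length / Real.exp (-(1/4) * τ) := by rw [hrpowexp]
      _ ≤ Real.exp (-(7/32) * p * mR) / Real.exp (-(1/4) * τ) :=
          div_le_div₀ (Real.exp_pos _).le e1 (Real.exp_pos _) le_rfl
      _ = Real.exp (-(7/32) * p * mR - -(1/4) * τ) := (Real.exp_sub _ _).symm
      _ ≤ Real.exp (-(6 * Real.log n)) := by
          refine Real.exp_le_exp.2 ?_
          rw [hτ]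
          nlinarith
      _ ≤ 1 / (2*(n:ℝ)^4) := by
          rw [Real.exp_neg, show (6:ℝ) * Real.log n = Real.log ((n:ℝ)^6) by
            rw [Real.log_pow]; push_cast; ring]
          rw [Real.exp_log (by positivity), one_div]
          apply inv_anti₀ (by positivity)
          nlinarith [pow_nonneg (by linarith : (0:ℝ) ≤ (n:ℝ)) 4, sq_nonneg ((n:ℝ)^2),
            pow_le_pow_left₀ (by norm_num : (0:ℝ) ≤ 2) hn2 2]
  have hcompl : Q.toOuterMeasure Sᶜ ≤ 1 / (n : ℝ≥0∞) ^ 4 := by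
    calc Q.toOuterMeasure Sᶜ ≤ Q.toOuterMeasure (S1 ∪ S2) := Q.toOuterMeasure.mono hsub
      _ ≤ Q.toOuterMeasure S1 + Q.toOuterMeasure S2 := MeasureTheory.measure_union_le S1 S2
      _ ≤ _ := by rw [← htail]; exact add_le_add hbound1 hbound2
  refine tsub_le_iff_right.2 ?_
  calc (1:ℝ≥0∞) = Q.toOuterMeasure S + Q.toOuterMeasure Sᶜ := (pmf_compl Q S).symm
    _ ≤ Q.toOuterMeasure S + 1 / (n : ℝ≥0∞) ^ 4 := add_le_add_right hcompl _
end
end
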